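/- Let G be the group with presentation ⟨a, b, c ∣ a² = b² = c² = (abc)² = 1⟩ and let G⁰ be the kernel of the length-parity homomorphism G → ℤ/2ℤ. Then G⁰ is a normal subgroup of G of index 2, so G/G⁰ ≅ ℤ/2ℤ; in particular G is virtually commutative (it has a commutative normal subgroup of finite index). -/

import Mathlib

open FreeGroup

/-- Relators of the group `⟨a, b, c ∣ a² = b² = c² = (abc)² = 1⟩`. -/
def P6rels : Set (FreeGroup (Fin 3)) :=
  {(of 0) ^ 2, (of 1) ^ 2, (of 2) ^ 2, (of 0 * of 1 * of 2) ^ 2}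

/-- The group `G = ⟨a, b, c ∣ a² = b² = c² = (abc)² = 1⟩`. -/
abbrev P6G := PresentedGroup P6rels

/-- The parity homomorphism `G → ℤ/2ℤ` sending each generator to `1`. -/
def parity : P6G →* Multiplicative (ZMod 2) :=
  PresentedGroup.toGroup (f := fun _ => Multiplicative.ofAdd (1 : ZMod 2)) (by
    intro r hr
    rcases hr with rfl | rfl | rfl | rfl <;>
      simp [map_pow, map_mul] <;> decide)

namespace P6aux

noncomputable abbrev a : P6G := PresentedGroup.of 0
noncomputable abbrev b : P6G := PresentedGroup.of 1
noncomputable abbrev c : P6G := PresentedGroup.of 2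

lemma rel_one {r : FreeGroup (Fin 3)} (hr : r ∈ P6rels) :
    PresentedGroup.mk P6rels r = 1 := by
  have : r ∈ Subgroup.normalClosure P6rels := Subgroup.subset_normalClosure hr
  exact (QuotientGroup.eq_one_iff r).mpr this

lemma ha : a * a = 1 := by
  have := rel_one (r := (of 0)^2) (by left; rfl)
  simpa [sq, map_mul, a, b, c, PresentedGroup.of] using this

lemma hb : b * b = 1 := by
  have := rel_one (r := (of 1)^2) (by right; left; rfl)
  simpa [sq, map_mul, a, b, c, PresentedGroup.of] using this

lemma hc : c * c = 1 := by
  have := rel_one (r := (of 2)^2) (by right; right; left; rfl)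
  simpa [sq, map_mul, a, b, c, PresentedGroup.of] using this

lemma habc : (a * b * c) * (a * b * c) = 1 := by
  have := rel_one (r := (of 0 * of 1 * of 2)^2) (by right; right; right; rfl)
  simpa [sq, map_mul, a, b, c, PresentedGroup.of] using this

lemma a_inv : a⁻¹ = a := by
  rw [inv_eq_iff_mul_eq_one]; exact ha
lemma b_inv : b⁻¹ = b := by
  rw [inv_eq_iff_mul_eq_one]; exact hb
lemma c_inv : c⁻¹ = c := by
  rw [inv_eq_iff_mul_eq_one]; exact hc

/-- `abc = cba`. -/
lemma habc' : a * b * c = c * b * a := by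
  have h : (a*b*c)⁻¹ = a*b*c := by
    rw [inv_eq_iff_mul_eq_one]; exact habc
  calc a * b * c = (a*b*c)⁻¹ := h.symm
    _ = c⁻¹ * (b⁻¹ * a⁻¹) := by group
    _ = c * b * a := by rw [a_inv, b_inv, c_inv, mul_assoc]

noncomputable abbrev u : P6G := a * b
noncomputable abbrev v : P6G := b * c

/-- `bc = acba`. -/
lemma hv : v = a * c * b * a := by
  have : a * (a * b * c) * a = a * (c * b * a) * a := by rw [habc']
  calc v = a * (a * b * c) := by
        rw [show a * (a*b*c) = (a*a)*(b*c) by group, ha, one_mul]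
    _ = a * (a * b * c) * (a * a) := by rw [ha, mul_one]
    _ = (a * (c * b * a) * a) * a := by rw [← mul_assoc, this]
    _ = a * c * b * (a * (a * a)) := by group
    _ = a * c * b * a := by rw [ha, mul_one]

lemma u_inv : u⁻¹ = b * a := by rw [mul_inv_rev, a_inv, b_inv]
lemma v_inv : v⁻¹ = c * b := by rw [mul_inv_rev, b_inv, c_inv]

lemma huv : u * v = a * c := by
  calc u * v = a * (b * b) * c := by group
    _ = a * c := by rw [hb, mul_one]

lemma comm_uv : u * v = v * u := by
  have h1 : v * u = a * c := by
    calc v * u = (a*c*b*a)*(a*b) := by rw [hv]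
      _ = a*c*b*(a*a)*b := by group
      _ = a*c*(b*b) := by rw [ha]; group
      _ = a*c := by rw [hb, mul_one]
  rw [huv, h1]

/-- `a u a = u⁻¹`. -/
lemma conj_u : a * u * a = u⁻¹ := by
  rw [u_inv]
  calc a * (a*b) * a = (a*a)*(b*a) := by group
    _ = b * a := by rw [ha, one_mul]

/-- `a v a = v⁻¹`. -/
lemma conj_v : a * v * a = v⁻¹ := by
  rw [v_inv, hv]
  calc a * (a*c*b*a) * a = (a*a)*(c*b)*(a*a) := by group
    _ = c * b := by rw [ha]; group


noncomputable abbrev H : Subgroup P6G := Subgroup.closure {u, v}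

lemma H_comm : ∀ x ∈ H, ∀ y ∈ H, x * y = y * x := by
  intro x hx y hy
  refine Subgroup.closure_induction₂
    (p := fun x y _ _ => Commute x y) ?_ ?_ ?_ ?_ ?_ ?_ ?_ hx hy
  · rintro x y (rfl | rfl) (rfl | rfl)
    · exact Commute.refl _
    · exact comm_uv
    · exact comm_uv.symm
    · exact Commute.refl _
  · exact fun x _ => Commute.one_left x
  · exact fun x _ => Commute.one_right x
  · exact fun _ _ _ _ _ _ h1 h2 => h1.mul_left h2
  · exact fun _ _ _ _ _ _ h1 h2 => h1.mul_right h2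
  · exact fun _ _ _ _ h => h.inv_left
  · exact fun _ _ _ _ h => h.inv_right

lemma conj_mem : ∀ x ∈ H, a * x * a ∈ H := by
  intro x hx
  refine Subgroup.closure_induction (p := fun g _ => a * g * a ∈ H) ?_ ?_ ?_ ?_ hx
  · rintro x (rfl | rfl)
    · rw [conj_u]
      exact inv_mem (Subgroup.subset_closure (by left; rfl))
    · rw [conj_v]
      exact inv_mem (Subgroup.subset_closure (by right; rfl))
  · simpa [ha] using one_mem H
  · intro x y _ _ h1 h2
    have : a * (x * y) * a = (a * x * a) * (a * y * a) := by
      rw [show (a*x*a)*(a*y*a) = a*x*(a*a)*y*a by group, ha]; group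
    rw [this]; exact mul_mem h1 h2
  · intro x _ h1
    have : a * x⁻¹ * a = (a * x * a)⁻¹ := by
      rw [mul_inv_rev, mul_inv_rev, a_inv]; group
    rw [this]; exact inv_mem h1

/-- `H ∪ Ha` as a subgroup. -/
noncomputable def S : Subgroup P6G where
  carrier := {g | g ∈ H ∨ g * a ∈ H}
  one_mem' := Or.inl (one_mem H)
  mul_mem' := by
    rintro x y (hx | hx) (hy | hy)
    · exact Or.inl (mul_mem hx hy)
    · right
      rw [show x * y * a = x * (y * a) by group]
      exact mul_mem hx hy
    · right
      have : x * y * a = (x * a) * (a * y * a) := by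
        rw [show (x*a)*(a*y*a) = x*(a*a)*y*a by group, ha]; group
      rw [this]
      exact mul_mem hx (conj_mem y hy)
    · left
      have : x * y = (x * a) * (a * (y * a) * a) := by
        rw [show (x*a)*(a*(y*a)*a) = x*(a*a)*y*(a*a) by group, ha]; group
      rw [this]
      exact mul_mem hx (conj_mem _ hy)
  inv_mem' := by
    rintro x (hx | hx)
    · exact Or.inl (inv_mem hx)
    · right
      have : x⁻¹ * a = a * (x * a)⁻¹ * a := by
        rw [mul_inv_rev, a_inv, show a*(a*x⁻¹)*a = (a*a)*(x⁻¹*a) by group, ha, one_mul]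
      rw [this]
      exact conj_mem _ (inv_mem hx)

lemma parity_of (i : Fin 3) : parity (PresentedGroup.of i) = Multiplicative.ofAdd (1 : ZMod 2) :=
  PresentedGroup.toGroup.of _

lemma parity_a : parity a = Multiplicative.ofAdd (1 : ZMod 2) := parity_of 0

lemma H_le_ker : H ≤ parity.ker := by
  rw [Subgroup.closure_le]
  rintro x (rfl | rfl) <;> simp only [SetLike.mem_coe, MonoidHom.mem_ker]
  · show parity (a * b) = 1
    rw [_root_.map_mul, parity_of, parity_of]; decide
  · show parity (b * c) = 1
    rw [_root_.map_mul, parity_of, parity_of]; decide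

lemma mem_S (g : P6G) : g ∈ H ∨ g * a ∈ H := by
  have h : ∀ g : P6G, g ∈ S := by
    refine fun g => PresentedGroup.generated_by _ _ ?_ g
    intro j
    fin_cases j
    · right
      show a * a ∈ H
      rw [ha]; exact one_mem H
    · right
      have : b * a = u⁻¹ := by rw [u_inv]
      show b * a ∈ H
      rw [this]
      exact inv_mem (Subgroup.subset_closure (by left; rfl))
    · right
      have : c * a = (u * v)⁻¹ := by rw [huv, mul_inv_rev, a_inv, c_inv]
      show c * a ∈ H
      rw [this]
      exact inv_mem (mul_mem (Subgroup.subset_closure (by left; rfl))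
        (Subgroup.subset_closure (by right; rfl)))
  exact h g

lemma ker_le_H : parity.ker ≤ H := by
  intro g hg
  rcases mem_S g with h | h
  · exact h
  · exfalso
    have h1 : parity (g * a) = 1 := H_le_ker h
    have h2 : parity g = 1 := hg
    rw [_root_.map_mul, h2, one_mul, parity_a] at h1
    exact absurd h1 (by decide)

lemma parity_surjective : Function.Surjective parity := by
  intro y
  obtain ⟨z, rfl⟩ : ∃ z : ZMod 2, Multiplicative.ofAdd z = y := ⟨y.toAdd, rfl⟩
  have hz : ∀ z : ZMod 2, z = 0 ∨ z = 1 := by decide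
  rcases hz z with rfl | rfl
  · exact ⟨1, map_one _⟩
  · exact ⟨a, parity_a⟩

end P6aux

open P6aux in
/-- `G⁰ = ker(parity)` is a normal subgroup of index 2 with `G/G⁰ ≅ ℤ/2ℤ`;
in particular `G` is virtually commutative: it has a commutative normal
subgroup of finite index. -/
theorem P6G_virtually_commutative :
    parity.ker.Normal ∧ parity.ker.index = 2 ∧
      Nonempty (P6G ⧸ parity.ker ≃* Multiplicative (ZMod 2)) ∧
      ∃ N : Subgroup P6G, N = parity.ker ∧ N.Normal ∧
        (∀ x ∈ N, ∀ y ∈ N, x * y = y * x) ∧ N.FiniteIndex := by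
  have hsurj := parity_surjective
  have hidx : parity.ker.index = 2 := by
    rw [Subgroup.index_ker, MonoidHom.range_eq_top.mpr hsurj, Subgroup.card_top]
    rw [Nat.card_eq_fintype_card]
    rfl
  refine ⟨inferInstance, hidx, ⟨QuotientGroup.quotientKerEquivOfSurjective parity hsurj⟩,
    parity.ker, rfl, inferInstance, ?_, ⟨by omega⟩⟩
  intro x hx y hy
  exact H_comm x (ker_le_H hx) y (ker_le_H hy)
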